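/- Let Compress be any compression function with finite global sensitivity GS, and let ε > 0 and δ ∈ (0,1). Define the randomized algorithm A_{ε,δ}(w) := DPCompress(w, ε, δ). Then A_{ε,δ} is an (ε, δ)-differentially private compression scheme: for every n ≥ 1, every pair of neighboring strings w ∼ w' ∈ Σⁿ, and every set S ⊆ ℕ, Pr[|A_{ε,δ}(w)| ∈ S] ≤ e^ε · Pr[|A_{ε,δ}(w')| ∈ S] + δ. -/

import Mathlib

open MeasureTheory

/-- `w ∼ w'`: strings of length `n` (1-indexed positions) differing in exactly
one position. -/
def Neighbor {α : Type*} (n : ℕ) (w w' : ℕ → α) : Prop :=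
  ∃ j, 1 ≤ j ∧ j ≤ n ∧ w j ≠ w' j ∧ ∀ i, i ≠ j → w i = w' i

/-- The Laplace distribution with mean `0` and scale parameter `b`, given by the
density `z ↦ (1/(2b))·exp(−|z|/b)` with respect to Lebesgue measure. -/
noncomputable def laplaceMeasure (b : ℝ) : Measure ℝ :=
  volume.withDensity (fun z => ENNReal.ofReal ((1 / (2 * b)) * Real.exp (-|z| / b)))

/-- The length of `DPCompress(w, ε, δ)` when the Laplace sample is `z`:
`|Compress(w)| + p` with padding `p = max {1, ⌈z + k⌉}`. -/
noncomputable def dpLen (c : ℕ) (k z : ℝ) : ℕ :=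
  c + (max 1 ⌈z + k⌉).toNat

open Set Filter

lemma lapDensity_measurable (b : ℝ) :
    Measurable fun z : ℝ => ENNReal.ofReal ((1 / (2 * b)) * Real.exp (-|z| / b)) := by
  apply Measurable.ennreal_ofReal
  fun_prop

lemma laplaceMeasure_apply (b : ℝ) {s : Set ℝ} (hs : MeasurableSet s) :
    laplaceMeasure b s
      = ∫⁻ z in s, ENNReal.ofReal ((1 / (2 * b)) * Real.exp (-|z| / b)) := by
  rw [laplaceMeasure, withDensity_apply _ hs]

lemma dpLen_measurable (c : ℕ) (k : ℝ) : Measurable fun z : ℝ => dpLen c k z := by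
  have h1 : Measurable fun z : ℝ => ⌈z + k⌉ :=
    Int.measurable_ceil.comp (measurable_id.add_const k)
  exact (Measurable.of_discrete (f := fun m : ℤ => c + (max 1 m).toNat)).comp h1

/-- Shift bound: the Laplace measure of a translate is at most `exp(|d|/b)` times
the Laplace measure of the set. -/
lemma lap_shift {b : ℝ} (hb : 0 < b) (d : ℝ) {B : Set ℝ} (hB : MeasurableSet B) :
    laplaceMeasure b ((fun z => z + d) ⁻¹' B)
      ≤ ENNReal.ofReal (Real.exp (|d| / b)) * laplaceMeasure b B := by
  set g : ℝ → ENNReal :=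
    fun z => ENNReal.ofReal ((1 / (2 * b)) * Real.exp (-|z| / b)) with hgdef
  have hg : Measurable g := lapDensity_measurable b
  have hpre : MeasurableSet ((fun z : ℝ => z + d) ⁻¹' B) :=
    hB.preimage (measurable_id.add_const d)
  have key : ∀ z : ℝ, Set.indicator ((fun z : ℝ => z + d) ⁻¹' B) g z
      = Set.indicator B (fun y => g (y - d)) (z + d) := by
    intro z
    by_cases h : z + d ∈ B <;>
      simp [Set.indicator, Set.mem_preimage, h]
  have pointwise : ∀ z : ℝ, g (z - d) ≤ ENNReal.ofReal (Real.exp (|d| / b)) * g z := by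
    intro z
    rw [hgdef]
    simp only
    rw [← ENNReal.ofReal_mul (Real.exp_nonneg _)]
    apply ENNReal.ofReal_le_ofReal
    have h1 : |z| - |z - d| ≤ |d| := by
      have := abs_sub_abs_le_abs_sub z (z - d)
      simpa using this
    have h2 : -|z - d| / b ≤ |d| / b + -|z| / b := by
      rw [← add_div]
      apply div_le_div_of_nonneg_right ?_ hb.le |>.trans_eq rfl
      linarith
    calc 1 / (2 * b) * Real.exp (-|z - d| / b)
        ≤ 1 / (2 * b) * Real.exp (|d| / b + -|z| / b) := by
          apply mul_le_mul_of_nonneg_left (Real.exp_le_exp.mpr h2) (by positivity)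
      _ = Real.exp (|d| / b) * (1 / (2 * b) * Real.exp (-|z| / b)) := by
          rw [Real.exp_add]; ring
  calc laplaceMeasure b ((fun z : ℝ => z + d) ⁻¹' B)
      = ∫⁻ z in (fun z : ℝ => z + d) ⁻¹' B, g z := laplaceMeasure_apply b hpre
    _ = ∫⁻ z, Set.indicator ((fun z : ℝ => z + d) ⁻¹' B) g z :=
        (lintegral_indicator hpre g).symm
    _ = ∫⁻ z, Set.indicator B (fun y => g (y - d)) (z + d) := by
        simp_rw [key]
    _ = ∫⁻ z, Set.indicator B (fun y => g (y - d)) z :=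
        lintegral_add_right_eq_self _ d
    _ = ∫⁻ z in B, g (z - d) := lintegral_indicator hB _
    _ ≤ ∫⁻ z in B, ENNReal.ofReal (Real.exp (|d| / b)) * g z :=
        lintegral_mono fun z => pointwise z
    _ = ENNReal.ofReal (Real.exp (|d| / b)) * ∫⁻ z in B, g z :=
        lintegral_const_mul _ hg
    _ = ENNReal.ofReal (Real.exp (|d| / b)) * laplaceMeasure b B := by
        rw [laplaceMeasure_apply b hB]

lemma integrableOn_exp_div_Iic {b : ℝ} (hb : 0 < b) (t : ℝ) :
    IntegrableOn (fun x : ℝ => Real.exp (x / b)) (Iic t) := by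
  have m : MeasurableEmbedding fun x : ℝ => -x :=
    (Homeomorph.neg ℝ).measurableEmbedding
  have h : IntegrableOn (fun x : ℝ => Real.exp (-(1 / b) * x)) (Ici (-t)) :=
    (integrableOn_Ici_iff_integrableOn_Ioi).mpr
      (exp_neg_integrableOn_Ioi _ (by positivity))
  have h' : IntegrableOn (fun x : ℝ => Real.exp (-(1 / b) * x)) (Ici (-t))
      (Measure.map (fun x : ℝ => -x) volume) := by
    rwa [Measure.map_neg_eq_self (volume : Measure ℝ)]
  have := (m.integrableOn_map_iff).mp h'
  have hset : (fun x : ℝ => -x) ⁻¹' Ici (-t) = Iic t := by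
    ext x; simp
  rw [hset] at this
  apply this.congr_fun ?_ measurableSet_Iic
  intro x _
  simp only [Function.comp]
  ring_nf

lemma integral_exp_div_Iic {b : ℝ} (hb : 0 < b) (t : ℝ) :
    ∫ z in Iic t, Real.exp (z / b) = b * Real.exp (t / b) := by
  have hderiv : ∀ x ∈ Iio t,
      HasDerivAt (fun x : ℝ => b * Real.exp (x / b)) (Real.exp (x / b)) x := by
    intro x _
    have h := (((hasDerivAt_id x).div_const b).exp).const_mul b
    refine h.congr_deriv ?_
    field_simp
    rfl
  have htend : Tendsto (fun x : ℝ => b * Real.exp (x / b)) atBot (nhds 0) := by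
    have h1 : Tendsto (fun x : ℝ => x / b) atBot atBot :=
      tendsto_id.atBot_div_const hb
    have h2 := Real.tendsto_exp_atBot.comp h1
    have := h2.const_mul b
    simpa using this
  have hcont : ContinuousWithinAt (fun x : ℝ => b * Real.exp (x / b)) (Iic t) t :=
    (by fun_prop : Continuous fun x : ℝ => b * Real.exp (x / b)).continuousWithinAt
  have := integral_Iic_of_hasDerivAt_of_tendsto hcont hderiv
    (integrableOn_exp_div_Iic hb t) htend
  simpa using this

/-- Tail bound: `Pr[Z < b·log(2δ)] ≤ δ`. -/
lemma lap_tail {b δ : ℝ} (hb : 0 < b) (hδ : 0 < δ) :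
    laplaceMeasure b (Iio (b * Real.log (2 * δ))) ≤ ENNReal.ofReal δ := by
  set t := b * Real.log (2 * δ) with ht
  have hInt : IntegrableOn (fun z : ℝ => 1 / (2 * b) * Real.exp (z / b)) (Iic t) :=
    (integrableOn_exp_div_Iic hb t).const_mul _
  calc laplaceMeasure b (Iio t)
      ≤ laplaceMeasure b (Iic t) := measure_mono Iio_subset_Iic_self
    _ = ∫⁻ z in Iic t, ENNReal.ofReal ((1 / (2 * b)) * Real.exp (-|z| / b)) :=
        laplaceMeasure_apply b measurableSet_Iic
    _ ≤ ∫⁻ z in Iic t, ENNReal.ofReal ((1 / (2 * b)) * Real.exp (z / b)) := by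
        apply lintegral_mono
        intro z
        apply ENNReal.ofReal_le_ofReal
        apply mul_le_mul_of_nonneg_left ?_ (by positivity)
        apply Real.exp_le_exp.mpr
        apply div_le_div_of_nonneg_right ?_ hb.le |>.trans_eq rfl
        exact neg_abs_le z
    _ = ENNReal.ofReal (∫ z in Iic t, 1 / (2 * b) * Real.exp (z / b)) := by
        rw [ofReal_integral_eq_lintegral_ofReal hInt
          (Filter.Eventually.of_forall fun x => by positivity)]
    _ = ENNReal.ofReal δ := by
        congr 1
        rw [integral_const_mul, integral_exp_div_Iic hb t]
        have htb : t / b = Real.log (2 * δ) := by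
          rw [ht, mul_div_cancel_left₀ _ hb.ne']
        rw [htb, Real.exp_log (by positivity)]
        field_simp

theorem dpcompress_is_dp {α β : Type*} (n : ℕ) (hn : 1 ≤ n)
    (Compress : (ℕ → α) → List β) (GS : ℕ) (hGSpos : 0 < GS)
    (hGS : ∀ w w' : ℕ → α, Neighbor n w w' →
      |((Compress w).length : ℤ) - ((Compress w').length : ℤ)| ≤ (GS : ℤ))
    (ε δ : ℝ) (hε : 0 < ε) (hδ0 : 0 < δ) (hδ1 : δ < 1)
    (w w' : ℕ → α) (hnb : Neighbor n w w') (S : Set ℕ) :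
    laplaceMeasure ((GS : ℝ) / ε)
        {z : ℝ | dpLen (Compress w).length
            ((GS : ℝ) / ε * Real.log (1 / (2 * δ)) + GS + 1) z ∈ S}
      ≤ ENNReal.ofReal (Real.exp ε) *
          laplaceMeasure ((GS : ℝ) / ε)
            {z : ℝ | dpLen (Compress w').length
                ((GS : ℝ) / ε * Real.log (1 / (2 * δ)) + GS + 1) z ∈ S}
        + ENNReal.ofReal δ := by
  have hGSR : (0 : ℝ) < (GS : ℝ) := by exact_mod_cast hGSpos
  set b : ℝ := (GS : ℝ) / ε with hbdef
  have hb : 0 < b := by positivity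
  set k : ℝ := b * Real.log (1 / (2 * δ)) + GS + 1 with hkdef
  set c : ℕ := (Compress w).length
  set c' : ℕ := (Compress w').length
  set d : ℤ := (c : ℤ) - (c' : ℤ) with hddef
  have hd : |d| ≤ (GS : ℤ) := hGS w w' hnb
  have hd' := abs_le.mp hd
  set A : Set ℝ := {z : ℝ | dpLen c k z ∈ S}
  set A' : Set ℝ := {z : ℝ | dpLen c' k z ∈ S} with hA'def
  have hA' : MeasurableSet A' := (dpLen_measurable c' k) MeasurableSet.of_discrete
  set t : ℝ := b * Real.log (2 * δ) with htdef
  have hkt : b * Real.log (1 / (2 * δ)) = -t := by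
    rw [one_div, Real.log_inv, htdef]; ring
  -- inclusion
  have hincl : A ⊆ Iio t ∪ ((fun z : ℝ => z + (d : ℝ)) ⁻¹' A') := by
    intro z hz
    by_cases hzt : z < t
    · exact Or.inl hzt
    · right
      have hzt' : t ≤ z := not_lt.mp hzt
      have hz' : (GS : ℝ) + 1 ≤ z + k := by
        rw [hkdef]
        linarith [hkt]
      have hceil : (GS : ℤ) + 1 ≤ ⌈z + k⌉ := by
        have := Int.ceil_mono hz'
        rwa [show ((GS : ℝ) + 1) = (((GS : ℤ) + 1 : ℤ) : ℝ) by push_cast; ring,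
          Int.ceil_intCast] at this
      have hceilshift : ⌈z + (d : ℝ) + k⌉ = ⌈z + k⌉ + d := by
        rw [show z + (d : ℝ) + k = (z + k) + ((d : ℤ) : ℝ) by push_cast; ring,
          Int.ceil_add_intCast]
      have heq : dpLen c' k (z + (d : ℝ)) = dpLen c k z := by
        simp only [dpLen, hceilshift]
        omega
      show dpLen c' k (z + (d : ℝ)) ∈ S
      rw [heq]
      exact hz
  -- bound the exp factor
  have hexp : ENNReal.ofReal (Real.exp (|(d : ℝ)| / b)) ≤ ENNReal.ofReal (Real.exp ε) := by
    apply ENNReal.ofReal_le_ofReal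
    apply Real.exp_le_exp.mpr
    rw [div_le_iff₀ hb]
    have : |(d : ℝ)| ≤ (GS : ℝ) := by exact_mod_cast hd
    calc |(d : ℝ)| ≤ (GS : ℝ) := this
      _ = ε * b := by rw [hbdef]; field_simp
  calc laplaceMeasure b A
      ≤ laplaceMeasure b (Iio t ∪ ((fun z : ℝ => z + (d : ℝ)) ⁻¹' A')) :=
        measure_mono hincl
    _ ≤ laplaceMeasure b (Iio t)
          + laplaceMeasure b ((fun z : ℝ => z + (d : ℝ)) ⁻¹' A') :=
        measure_union_le _ _
    _ ≤ ENNReal.ofReal δ + ENNReal.ofReal (Real.exp (|(d : ℝ)| / b)) * laplaceMeasure b A' := by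
        gcongr
        · exact lap_tail hb hδ0
        · exact lap_shift hb (d : ℝ) hA'
    _ ≤ ENNReal.ofReal δ + ENNReal.ofReal (Real.exp ε) * laplaceMeasure b A' := by
        gcongr
    _ = ENNReal.ofReal (Real.exp ε) * laplaceMeasure b A' + ENNReal.ofReal δ :=
        add_comm _ _
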